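/- Let E be a continuous signature and X a topological E-algebra. For every compact subset L ⊆ E, every compact subset Z ⊆ X and every n ∈ ω, the set ⟨Z⟩^L_n is a compact subset of X; consequently ⟨Z⟩^L_ω = ⋃_{n∈ω} ⟨Z⟩^L_n is σ-compact. -/

import Mathlib

open Set Topology TopologicalSpace

universe u v

/-- A topological algebra over the continuous signature `E = ⊕ₙ Eₙ`:
a topological space with continuous operations `Eₙ × Xⁿ → X`. -/
structure TopAlg (E : ℕ → Type u) [∀ n, TopologicalSpace (E n)] : Type (u + 1) where
  carrier : Type u
  [top : TopologicalSpace carrier]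
  op : ∀ n, E n → (Fin n → carrier) → carrier
  cont : ∀ n, Continuous fun p : E n × (Fin n → carrier) => op n p.1 p.2

attribute [instance] TopAlg.top

variable {E : ℕ → Type u} [∀ n, TopologicalSpace (E n)]

/-- `h` is an `E`-homomorphism of topological `E`-algebras. -/
def IsHomE (X Y : TopAlg E) (h : X.carrier → Y.carrier) : Prop :=
  ∀ (n : ℕ) (z : E n) (v : Fin n → X.carrier), h (X.op n z v) = Y.op n z fun i => h (v i)

/-- A subset is a subalgebra if it is closed under all the operations. -/
def IsSubalg (X : TopAlg E) (A : Set X.carrier) : Prop :=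
  ∀ (n : ℕ) (z : E n) (v : Fin n → X.carrier), (∀ i, v i ∈ A) → X.op n z v ∈ A

/-- The subalgebra `A` of `X`, as a topological `E`-algebra with the subspace topology. -/
def subAlg (X : TopAlg E) (A : Set X.carrier) (hA : IsSubalg X A) : TopAlg E where
  carrier := A
  op n z v := ⟨X.op n z fun i => (v i).1, hA n z _ fun i => (v i).2⟩
  cont n := by
    apply Continuous.subtype_mk
    exact (X.cont n).comp (continuous_fst.prodMk (continuous_pi fun i =>
      continuous_subtype_val.comp ((continuous_apply i).comp continuous_snd)))

/-- The Tychonov product of a family of topological `E`-algebras. -/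
def prodAlg {ι : Type u} (X : ι → TopAlg E) : TopAlg E where
  carrier := ∀ i, (X i).carrier
  op n z v i := (X i).op n z fun j => v j i
  cont n := continuous_pi fun i => ((X i).cont n).comp
    (continuous_fst.prodMk (continuous_pi fun j =>
      (continuous_apply i).comp ((continuous_apply j).comp continuous_snd)))

/-- A Tychonov space: completely regular and Hausdorff. -/
def Tychonov (X : Type v) [TopologicalSpace X] : Prop :=
  CompletelyRegularSpace X ∧ T2Space X

/-- A complete quasivariety: closed under subalgebras, Tychonov products,
and under algebraic isomorphisms having Tychonov domain. -/
def IsCompleteQuasivariety (K : Set (TopAlg E)) : Prop :=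
  (∀ X ∈ K, ∀ (A : Set X.carrier) (hA : IsSubalg X A), subAlg X A hA ∈ K) ∧
  (∀ (ι : Type u) (X : ι → TopAlg E), (∀ i, X i ∈ K) → prodAlg X ∈ K) ∧
  (∀ X : TopAlg E, Tychonov X.carrier →
    (∃ Y ∈ K, ∃ h : X.carrier → Y.carrier, Function.Bijective h ∧ IsHomE X Y h ∧
      ∃ g : Y.carrier → X.carrier, Function.LeftInverse g h ∧ Function.RightInverse g h ∧
        IsHomE Y X g) → X ∈ K)

/-- `K` is a non-trivial class: some member has more than one point. -/
def NontrivialClass (K : Set (TopAlg E)) : Prop :=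
  ∃ X ∈ K, ∃ a b : X.carrier, a ≠ b

/-- `(F, η)` is a free topological `E`-algebra over `X` in the class `K`. -/
def IsFreeAlg (K : Set (TopAlg E)) (X : Type u) [TopologicalSpace X]
    (F : TopAlg E) (η : X → F.carrier) : Prop :=
  F ∈ K ∧ Continuous η ∧ ∀ Y ∈ K, ∀ f : X → Y.carrier, Continuous f →
    ∃! h : F.carrier → Y.carrier, (Continuous h ∧ IsHomE F Y h) ∧ f = h ∘ η

/-- The sets `⟨Z⟩ᴸₙ`: iterated application of the operations with parameters in `L`
to the elements of `Z`. -/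
def hullSeq (X : TopAlg E) (L : Set (Σ n, E n)) (Z : Set X.carrier) : ℕ → Set X.carrier
  | 0 => Z
  | n + 1 => hullSeq X L Z n ∪
      ⋃ k, (fun p : E k × (Fin k → X.carrier) => X.op k p.1 p.2) ''
        {p | (⟨k, p.1⟩ : Σ n, E n) ∈ L ∧ ∀ i, p.2 i ∈ hullSeq X L Z n}

/-- A `k_ω`-sequence for `X`. -/
def IsKOmegaSeq (X : Type v) [TopologicalSpace X] (C : ℕ → Set X) : Prop :=
  (∀ n, IsCompact (C n)) ∧ Monotone C ∧ (⋃ n, C n) = Set.univ ∧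
    ∀ U : Set X, IsOpen U ↔ ∀ n, IsOpen ((Subtype.val ⁻¹' U : Set (C n)))

/-- A `k_ω`-space: a Hausdorff space which is the direct limit of a `k_ω`-sequence. -/
def IsKOmega (X : Type v) [TopologicalSpace X] : Prop :=
  T2Space X ∧ ∃ C : ℕ → Set X, IsKOmegaSeq X C

/-- A space is submetrizable if its topology is finer than some metrizable topology. -/
def Submetrizable (X : Type v) [t : TopologicalSpace X] : Prop :=
  ∃ m : TopologicalSpace X, t ≤ m ∧ @MetrizableSpace X m

/-- `X` is an absolute neighborhood extensor for the class of spaces satisfying `P`. -/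
def IsANEFor (X : Type u) [TopologicalSpace X]
    (P : (A : Type v) → TopologicalSpace A → Prop) : Prop :=
  ∀ (A : Type v) [tA : TopologicalSpace A], P A tA → ∀ B : Set A, IsClosed B →
    ∀ f : B → X, Continuous f → ∃ N : Set A, IsOpen N ∧ B ⊆ N ∧
      ∃ g : N → X, Continuous g ∧ ∀ (a : A) (hB : a ∈ B) (hN : a ∈ N), g ⟨a, hN⟩ = f ⟨a, hB⟩

/-- `X` is an `ANR(k_ω)`-space: whenever `X` is embedded as a closed subspace of a
`k_ω`-space, it is a retract of a neighborhood. -/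
def IsANRkw (X : Type u) [TopologicalSpace X] : Prop :=
  IsKOmega X ∧ ∀ (Y : Type v) [TopologicalSpace Y], IsKOmega Y →
    ∀ e : X → Y, IsClosedEmbedding e →
      ∃ N : Set Y, (∀ y ∈ Set.range e, N ∈ nhds y) ∧
        ∃ r : N → Y, Continuous r ∧ (∀ z : N, r z ∈ Set.range e) ∧
          ∀ z : N, (z : Y) ∈ Set.range e → r z = (z : Y)

/-- For compact `L ⊆ E` and compact `Z ⊆ X`, each set `⟨Z⟩ᴸₙ` is compact, and hence
`⟨Z⟩ᴸ_ω = ⋃ₙ ⟨Z⟩ᴸₙ` is σ-compact. -/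
theorem hullSeq_isCompact
    (E : ℕ → Type u) [∀ n, TopologicalSpace (E n)] (X : TopAlg E)
    (L : Set (Σ n, E n)) (hL : IsCompact L)
    (Z : Set X.carrier) (hZ : IsCompact Z) :
    (∀ n, IsCompact (hullSeq X L Z n)) ∧ IsSigmaCompact (⋃ n, hullSeq X L Z n) := by
  obtain ⟨T, hT⟩ : ∃ T : Finset ℕ, ∀ k ∉ T, (Sigma.mk k ⁻¹' L : Set (E k)) = ∅ := by
    have hcov : L ⊆ ⋃ k : ℕ, Set.range (Sigma.mk k : E k → Σ n, E n) := by
      rintro ⟨k, x⟩ _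
      exact Set.mem_iUnion.2 ⟨k, ⟨x, rfl⟩⟩
    obtain ⟨T, hT⟩ := hL.elim_finite_subcover _
      (fun k : ℕ => isOpen_range_sigmaMk) hcov
    refine ⟨T, fun k hk => Set.eq_empty_iff_forall_notMem.2 fun x hx => ?_⟩
    obtain ⟨j, hj, y, hy⟩ := Set.mem_iUnion₂.1 (hT hx)
    cases hy
    exact hk hj
  have key : ∀ {k : ℕ} {C : Set X.carrier}, IsCompact C →
      IsCompact ((fun p : E k × (Fin k → X.carrier) => X.op k p.1 p.2) ''
        {p | (⟨k, p.1⟩ : Σ n, E n) ∈ L ∧ ∀ i, p.2 i ∈ C}) := by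
    intro k C hC
    have hpre : IsCompact (Sigma.mk k ⁻¹' L : Set (E k)) :=
      Topology.IsClosedEmbedding.sigmaMk.isInducing.isCompact_preimage
        isClosed_range_sigmaMk hL
    have hpi : IsCompact (Set.univ.pi fun _ : Fin k => C) :=
      isCompact_univ_pi fun _ => hC
    have hset : {p : E k × (Fin k → X.carrier) |
        (⟨k, p.1⟩ : Σ n, E n) ∈ L ∧ ∀ i, p.2 i ∈ C} =
        (Sigma.mk k ⁻¹' L) ×ˢ (Set.univ.pi fun _ : Fin k => C) := by
      ext p
      simp [Set.mem_prod, Set.mem_pi]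
    rw [hset]
    exact (hpre.prod hpi).image (X.cont k)
  have hC : ∀ n, IsCompact (hullSeq X L Z n) := by
    intro n
    induction n with
    | zero => exact hZ
    | succ n ih =>
      refine ih.union ?_
      have hUnion : (⋃ k, (fun p : E k × (Fin k → X.carrier) => X.op k p.1 p.2) ''
          {p | (⟨k, p.1⟩ : Σ n, E n) ∈ L ∧ ∀ i, p.2 i ∈ hullSeq X L Z n}) =
          ⋃ k ∈ T, (fun p : E k × (Fin k → X.carrier) => X.op k p.1 p.2) ''
          {p | (⟨k, p.1⟩ : Σ n, E n) ∈ L ∧ ∀ i, p.2 i ∈ hullSeq X L Z n} := by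
        apply Set.Subset.antisymm
        · intro x hx
          obtain ⟨k, p, hp, rfl⟩ := Set.mem_iUnion.1 hx
          by_cases hkT : k ∈ T
          · exact Set.mem_biUnion hkT ⟨p, hp, rfl⟩
          · have hmem : p.1 ∈ (Sigma.mk k ⁻¹' L : Set (E k)) := hp.1
            rw [hT k hkT] at hmem
            exact hmem.elim
        · exact Set.iUnion₂_subset fun k _ x hx => Set.mem_iUnion.2 ⟨k, hx⟩
      rw [hUnion]
      exact T.isCompact_biUnion fun k _ => key ih
  exact ⟨hC, hullSeq X L Z, hC, rfl⟩
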